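/- There exists a constant C > 0, independent of the triangle, such that for every nondegenerate triangle K in ℝ² and every C¹ function v : ℝ² → ℝ with ∫_K v dx = 0, one has ∫_K v² dx ≤ C² h_K² ∫_K |∇v|² dx (equivalently, ‖v‖_{L²(K)} ≤ C h_K |v|_{H¹(K)}). In particular, for every C¹ function f, the deviation from its mean value over K satisfies ‖f − (1/|K|)∫_K f dx‖_{L²(K)} ≤ C h_K |f|_{H¹(K)}. -/

import Mathlib

open MeasureTheory

noncomputable section

abbrev E2 : Type := EuclideanSpace ℝ (Fin 2)

/-- The point (a, b) in the Euclidean plane. -/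
def pt (a b : ℝ) : E2 := WithLp.toLp 2 ![a, b]

/-- First standard basis vector. -/
def vex : E2 := pt 1 0
/-- Second standard basis vector. -/
def vey : E2 := pt 0 1

/-- Euclidean dot product on the plane. -/
def dot2 (v w : E2) : ℝ := v 0 * w 0 + v 1 * w 1

/-- rot (w₁, w₂) = (w₂, −w₁). -/
def rot (w : E2) : E2 := pt (w 1) (-(w 0))

/-- Flux of a vector field across the (oriented) segment from `a` to `b`:
∫₀¹ q(a + t(b − a)) · rot(b − a) dt, the line integral of the normal component. -/
def flux (q : E2 → E2) (a b : E2) : ℝ :=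
  ∫ t in (0:ℝ)..1, dot2 (q (a + t • (b - a))) (rot (b - a))

/-- Squared Euclidean norm of the gradient of a scalar function. -/
def gradSq (v : E2 → ℝ) (x : E2) : ℝ :=
  (fderiv ℝ v x vex) ^ 2 + (fderiv ℝ v x vey) ^ 2

/-- Gradient vector of a scalar function. -/
def gradVec (v : E2 → ℝ) (x : E2) : E2 :=
  pt (fderiv ℝ v x vex) (fderiv ℝ v x vey)

/-- Squared Frobenius norm of the Jacobian of a vector field
(sum of squares of the four first-order partial derivatives). -/
def frobSq (q : E2 → E2) (x : E2) : ℝ :=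
  (fderiv ℝ q x vex 0) ^ 2 + (fderiv ℝ q x vey 0) ^ 2 +
  (fderiv ℝ q x vex 1) ^ 2 + (fderiv ℝ q x vey 1) ^ 2

/-- Divergence of a planar vector field. -/
def divg (q : E2 → E2) (x : E2) : ℝ := fderiv ℝ q x vex 0 + fderiv ℝ q x vey 1

/-- The reference triangle with vertices (0,0), (1,0), (0,1). -/
def Khat : Set E2 := convexHull ℝ {pt 0 0, pt 1 0, pt 0 1}

/-- The triangle with vertices (0,0), (α,0), (0,β). -/
def Kab (a b : ℝ) : Set E2 := convexHull ℝ {pt 0 0, pt a 0, pt 0 b}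

/-- Matrix–vector multiplication for 2×2 matrices acting on the plane. -/
def matVec (A : Matrix (Fin 2) (Fin 2) ℝ) (x : E2) : E2 :=
  pt (A 0 0 * x 0 + A 0 1 * x 1) (A 1 0 * x 0 + A 1 1 * x 1)

/-- Squared Frobenius norm of a 2×2 matrix. -/
def mFrobSq (M : Matrix (Fin 2) (Fin 2) ℝ) : ℝ :=
  M 0 0 ^ 2 + M 0 1 ^ 2 + M 1 0 ^ 2 + M 1 1 ^ 2



-- ######################################################################
-- Auxiliary lemmas
-- ######################################################################

section PoincareAux

lemma aux_decomp (w : E2) : w = w 0 • vex + w 1 • vey := by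
  ext i; fin_cases i <;> simp [vex, vey, pt]

lemma aux_continuous_fderiv_apply {v : E2 → ℝ} (hv : ContDiff ℝ 1 v) (w : E2) :
    Continuous fun x => fderiv ℝ v x w :=
  (hv.continuous_fderiv one_ne_zero).clm_apply continuous_const

lemma aux_continuous_gradSq {v : E2 → ℝ} (hv : ContDiff ℝ 1 v) : Continuous (gradSq v) := by
  unfold gradSq
  exact ((aux_continuous_fderiv_apply hv vex).pow 2).add
    ((aux_continuous_fderiv_apply hv vey).pow 2)

lemma aux_gradSq_nonneg (v : E2 → ℝ) (x : E2) : 0 ≤ gradSq v x := by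
  unfold gradSq; positivity

lemma aux_fderiv_apply_sq_le (v : E2 → ℝ) (z w : E2) :
    (fderiv ℝ v z w) ^ 2 ≤ ‖w‖ ^ 2 * gradSq v z := by
  have h1 : fderiv ℝ v z w = w 0 * fderiv ℝ v z vex + w 1 * fderiv ℝ v z vey := by
    conv_lhs => rw [aux_decomp w]
    rw [map_add, _root_.map_smul, _root_.map_smul]; simp [smul_eq_mul]
  have h2 : ‖w‖ ^ 2 = w 0 ^ 2 + w 1 ^ 2 := by
    rw [EuclideanSpace.norm_eq]
    rw [Real.sq_sqrt (by positivity)]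
    simp [Fin.sum_univ_two, sq_abs]
  rw [h1, h2]
  unfold gradSq
  nlinarith [sq_nonneg (w 0 * fderiv ℝ v z vey - w 1 * fderiv ℝ v z vex)]

-- Cauchy-Schwarz on [0,1]
lemma aux_sq_integral_le {f : ℝ → ℝ} (hf : Continuous f) :
    (∫ t in (0:ℝ)..1, f t) ^ 2 ≤ ∫ t in (0:ℝ)..1, (f t) ^ 2 := by
  set m := ∫ t in (0:ℝ)..1, f t with hm
  have h1 : (0:ℝ) ≤ ∫ t in (0:ℝ)..1, (f t - m) ^ 2 :=
    intervalIntegral.integral_nonneg (by norm_num) (fun t _ => sq_nonneg _)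
  have h2 : ∫ t in (0:ℝ)..1, (f t - m) ^ 2
      = (∫ t in (0:ℝ)..1, (f t)^2) - m^2 := by
    have hint : IntervalIntegrable f volume 0 1 := hf.intervalIntegrable _ _
    have hint2 : IntervalIntegrable (fun t => (f t)^2) volume 0 1 :=
      (hf.pow 2).intervalIntegrable _ _
    have : ∀ t, (f t - m)^2 = (f t)^2 - (2*m) * f t + m^2 := by intro t; ring
    simp_rw [this]
    rw [intervalIntegral.integral_add (hint2.sub (hint.const_mul _))
          (intervalIntegrable_const (c := m^2)),
        intervalIntegral.integral_sub hint2 (hint.const_mul _),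
        intervalIntegral.integral_const_mul, intervalIntegral.integral_const]
    simp [← hm]; ring
  nlinarith [h1, h2]

-- FTC along a segment plus Cauchy-Schwarz
lemma aux_key_pointwise {v : E2 → ℝ} (hv : ContDiff ℝ 1 v) (x y : E2) (h : ℝ)
    (hxy : ‖x - y‖ ≤ h) :
    (v x - v y) ^ 2 ≤ h ^ 2 * ∫ t in (0:ℝ)..1, gradSq v (y + t • (x - y)) := by
  have h0 : 0 ≤ h := le_trans (norm_nonneg _) hxy
  set ℓ : ℝ → E2 := fun t => y + t • (x - y) with hℓ
  have hℓc : Continuous ℓ := by continuity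
  set D : ℝ → ℝ := fun t => fderiv ℝ v (ℓ t) (x - y) with hD
  have hDc : Continuous D := ((hv.continuous_fderiv one_ne_zero).comp hℓc).clm_apply continuous_const
  have hderiv : ∀ t ∈ Set.uIcc (0:ℝ) 1, HasDerivAt (fun t => v (ℓ t)) (D t) t := by
    intro t _
    have hline : HasDerivAt ℓ (x - y) t := by
      have : HasDerivAt (fun t : ℝ => t • (x - y)) ((1:ℝ) • (x - y)) t :=
        (hasDerivAt_id t).smul_const (x - y)
      have h2 := this.const_add y; rw [one_smul] at h2; exact h2
    have hdv : HasFDerivAt v (fderiv ℝ v (ℓ t)) (ℓ t) :=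
      (hv.differentiable one_ne_zero (ℓ t)).hasFDerivAt
    exact (hdv.comp_hasDerivAt t hline)
  have hftc : v x - v y = ∫ t in (0:ℝ)..1, D t := by
    have := intervalIntegral.integral_eq_sub_of_hasDerivAt hderiv (hDc.intervalIntegrable _ _)
    rw [this]; simp [hℓ]
  rw [hftc]
  calc (∫ t in (0:ℝ)..1, D t) ^ 2 ≤ ∫ t in (0:ℝ)..1, (D t)^2 := aux_sq_integral_le hDc
    _ ≤ ∫ t in (0:ℝ)..1, h^2 * gradSq v (ℓ t) := by
        apply intervalIntegral.integral_mono_on (by norm_num)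
          ((hDc.pow 2).intervalIntegrable _ _)
          ((continuous_const.mul ((aux_continuous_gradSq hv).comp hℓc)).intervalIntegrable _ _)
        intro t _
        calc (D t)^2 ≤ ‖x - y‖^2 * gradSq v (ℓ t) := aux_fderiv_apply_sq_le _ _ _
          _ ≤ h^2 * gradSq v (ℓ t) := by
              apply mul_le_mul_of_nonneg_right _ (aux_gradSq_nonneg _ _)
              exact pow_le_pow_left₀ (norm_nonneg _) hxy 2
    _ = h^2 * ∫ t in (0:ℝ)..1, gradSq v (ℓ t) := intervalIntegral.integral_const_mul _ _

open scoped ENNReal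

lemma aux_scale_bound (G : E2 → ℝ≥0∞) (hG : Measurable G) {K : Set E2} (hK : Convex ℝ K)
    (hKm : MeasurableSet K)
    {y : E2} (hy : y ∈ K) {t : ℝ} (ht0 : 0 < t) (ht1 : t ≤ 1) :
    ∫⁻ x in K, G (y + t • (x - y)) ≤ ENNReal.ofReal (t⁻¹ ^ 2) * ∫⁻ z in K, G z := by
  set φ : E2 → E2 := fun x => (y - t • y) + t • x with hφ
  have hφeq : ∀ x, y + t • (x - y) = φ x := by intro x; simp only [hφ]; module
  have hφmeas : Measurable φ := by fun_prop
  have hmaps : ∀ x ∈ K, φ x ∈ K := by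
    intro x hx
    have := hK hy hx (by linarith : (0:ℝ) ≤ 1 - t) ht0.le (by ring)
    convert this using 1
    simp only [hφ]; module
  have htrans : Measure.map (fun z => (y - t • y) + z) (volume : Measure E2) = volume :=
    Measure.IsAddLeftInvariant.map_add_left_eq_self _
  have hmap : Measure.map φ volume = ENNReal.ofReal (t⁻¹ ^ 2) • volume := by
    have h1 : φ = (fun z => (y - t • y) + z) ∘ (fun x => t • x) := rfl
    rw [h1, ← Measure.map_map (by fun_prop) (by fun_prop),
      Measure.map_addHaar_smul volume ht0.ne', Measure.map_smul, htrans]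
    congr 1
    rw [finrank_euclideanSpace_fin, abs_of_pos (by positivity)]
    field_simp
  calc ∫⁻ x in K, G (y + t • (x - y))
      = ∫⁻ x in K, (K.indicator G) (φ x) := by
        refine setLIntegral_congr_fun hKm ?_
        intro x hx
        show G (y + t • (x - y)) = K.indicator G (φ x)
        rw [hφeq, Set.indicator_of_mem (hmaps x hx)]
    _ ≤ ∫⁻ x, (K.indicator G) (φ x) := setLIntegral_le_lintegral _ _
    _ = ∫⁻ z, K.indicator G z ∂(Measure.map φ volume) :=
        (lintegral_map (hG.indicator hKm) hφmeas).symm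
    _ = ENNReal.ofReal (t⁻¹ ^ 2) * ∫⁻ z in K, G z := by
        rw [hmap, lintegral_smul_measure, lintegral_indicator hKm, smul_eq_mul]

lemma aux_interval_inv_sq : ∫ x in (1/2:ℝ)..1, (x⁻¹)^2 = 1 := by
  have h : ∀ x : ℝ, (x⁻¹)^2 = x ^ (-2 : ℤ) := by
    intro x; rw [inv_pow, zpow_neg]; norm_cast
  rw [intervalIntegral.integral_congr (g := fun x => x ^ (-2:ℤ)) ?_]
  · rw [integral_zpow]
    · norm_num
    · right
      constructor
      · norm_num
      · rw [Set.uIcc_of_le (by norm_num)]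
        intro hmem
        have := hmem.1; norm_num at this
  · intro x _
    exact h x

lemma aux_tint1 : ∫⁻ t in Set.Ioc (1/2:ℝ) 1, ENNReal.ofReal (t⁻¹ ^ 2) = 1 := by
  have hint : IntegrableOn (fun t : ℝ => (t⁻¹)^2) (Set.Ioc (1/2) 1) volume := by
    apply (ContinuousOn.integrableOn_Icc ?_).mono_set Set.Ioc_subset_Icc_self
    intro x hx
    have hx0 : x ≠ 0 := by intro h; rw [h] at hx; have := hx.1; norm_num at this
    exact ((continuousAt_inv₀ hx0).continuousWithinAt).pow 2
  rw [← ofReal_integral_eq_lintegral_ofReal hint (ae_of_all _ (fun t => by positivity))]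
  rw [← intervalIntegral.integral_of_le (by norm_num)]
  rw [aux_interval_inv_sq]; norm_num

lemma aux_tint2 : ∫⁻ t in Set.Ioc (0:ℝ) (1/2), ENNReal.ofReal ((1-t)⁻¹ ^ 2) = 1 := by
  have hint : IntegrableOn (fun t : ℝ => ((1-t)⁻¹)^2) (Set.Ioc (0:ℝ) (1/2)) volume := by
    apply (ContinuousOn.integrableOn_Icc ?_).mono_set Set.Ioc_subset_Icc_self
    intro x hx
    have hx0 : 1 - x ≠ 0 := by intro h; have := hx.2; norm_num at this ⊢; linarith
    exact (((continuousAt_inv₀ hx0).comp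
      ((continuous_const.sub continuous_id).continuousAt)).continuousWithinAt).pow 2
  rw [← ofReal_integral_eq_lintegral_ofReal hint (ae_of_all _ (fun t => by positivity))]
  rw [← intervalIntegral.integral_of_le (by norm_num)]
  have := intervalIntegral.integral_comp_sub_left (a := (0:ℝ)) (b := 1/2) (fun u : ℝ => (u⁻¹)^2) 1
  norm_num at this
  simp only [inv_pow]
  rw [this]
  have h2 := aux_interval_inv_sq
  simp only [inv_pow] at h2
  rw [h2]; norm_num

set_option maxHeartbeats 400000 in
lemma aux_poincare {v : E2 → ℝ} (hv : ContDiff ℝ 1 v) {K : Set E2} (hK : Convex ℝ K)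
    (hKc : IsCompact K) (hKm : MeasurableSet K) (hvol : volume K ≠ 0)
    (hmean : (∫ x in K, v x) = 0) :
    (∫ x in K, (v x) ^ 2) ≤ Metric.diam K ^ 2 * ∫ x in K, gradSq v x := by
  set h := Metric.diam K with hh
  have hh0 : 0 ≤ h := Metric.diam_nonneg
  set g := gradSq v with hg
  have gcont : Continuous g := aux_continuous_gradSq hv
  have gnn : ∀ z, 0 ≤ g z := aux_gradSq_nonneg v
  set G : E2 → ℝ≥0∞ := fun z => ENNReal.ofReal (g z) with hGdef
  have hGm : Measurable G := gcont.measurable.ennreal_ofReal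
  set V := (volume K).toReal with hV
  have hKfin : volume K ≠ ⊤ := hKc.measure_lt_top.ne
  have hVpos : 0 < V := ENNReal.toReal_pos hvol hKfin
  set Q := ∫ x in K, (v x) ^ 2 with hQ
  set Ig := ∫ z in K, g z with hIg
  have hIgnn : 0 ≤ Ig := setIntegral_nonneg hKm fun z _ => gnn z
  set I := ∫⁻ z in K, G z with hIdef
  have hgint : IntegrableOn g K := gcont.continuousOn.integrableOn_compact hKc
  have hI : I = ENNReal.ofReal Ig :=
    (ofReal_integral_eq_lintegral_ofReal hgint (ae_of_all _ gnn)).symm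
  have hIne : I ≠ ⊤ := by rw [hI]; exact ENNReal.ofReal_ne_top
  have hvK : IntegrableOn v K := hv.continuous.continuousOn.integrableOn_compact hKc
  have hv2K : IntegrableOn (fun x => (v x) ^ 2) K :=
    (hv.continuous.pow 2).continuousOn.integrableOn_compact hKc
  -- Step 1: inner identity
  have hinner : ∀ x : E2, ∫ y in K, (v x - v y) ^ 2 = V * (v x) ^ 2 + Q := by
    intro x
    have e : ∀ y : E2, (v x - v y) ^ 2 = ((v x) ^ 2 - (2 * v x) * v y) + (v y) ^ 2 := by
      intro y; ring
    simp_rw [e]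
    have i1 : IntegrableOn (fun y => (v x) ^ 2 - 2 * v x * v y) K :=
      (continuous_const.sub (continuous_const.mul hv.continuous)).continuousOn.integrableOn_compact hKc
    have ic : IntegrableOn (fun _ : E2 => (v x) ^ 2) K :=
      continuous_const.continuousOn.integrableOn_compact hKc
    have im : IntegrableOn (fun y => 2 * v x * v y) K :=
      (continuous_const.mul hv.continuous).continuousOn.integrableOn_compact hKc
    rw [integral_add i1 hv2K, integral_sub ic im, integral_const_mul, hmean, setIntegral_const]
    simp [smul_eq_mul, measureReal_def, ← hV, ← hQ]
  -- Step 1': outer identity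
  have hS : (∫ x in K, ∫ y in K, (v x - v y) ^ 2) = 2 * V * Q := by
    have e : (fun x => ∫ y in K, (v x - v y) ^ 2) = fun x => V * (v x) ^ 2 + Q :=
      funext hinner
    have i1 : IntegrableOn (fun x => V * (v x) ^ 2) K :=
      (continuous_const.mul (hv.continuous.pow 2)).continuousOn.integrableOn_compact hKc
    have ic : IntegrableOn (fun _ : E2 => Q) K :=
      continuous_const.continuousOn.integrableOn_compact hKc
    rw [e, integral_add i1 ic, integral_const_mul, setIntegral_const]
    simp [smul_eq_mul, measureReal_def, ← hV, ← hQ]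
    ring
  -- Step 2: to lintegral
  set A := ∫⁻ x in K, ∫⁻ y in K, ENNReal.ofReal ((v x - v y) ^ 2) with hAdef
  have hA : A = ENNReal.ofReal (2 * V * Q) := by
    have hin : ∀ x : E2, ENNReal.ofReal (∫ y in K, (v x - v y) ^ 2)
        = ∫⁻ y in K, ENNReal.ofReal ((v x - v y) ^ 2) := by
      intro x
      exact ofReal_integral_eq_lintegral_ofReal
        ((((continuous_const.sub hv.continuous)).pow 2).continuousOn.integrableOn_compact hKc)
        (ae_of_all _ fun y => sq_nonneg _)
    have houter : IntegrableOn (fun x => ∫ y in K, (v x - v y) ^ 2) K := by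
      rw [show (fun x => ∫ y in K, (v x - v y) ^ 2) = fun x => V * (v x) ^ 2 + Q from
        funext hinner]
      exact (hv2K.const_mul V).add (integrableOn_const hKc.measure_lt_top.ne)
    have hnn : 0 ≤ᵐ[volume.restrict K] fun x => ∫ y in K, (v x - v y) ^ 2 :=
      ae_of_all _ fun x => setIntegral_nonneg hKm fun y _ => sq_nonneg _
    rw [← hS, ofReal_integral_eq_lintegral_ofReal houter hnn]
    exact lintegral_congr fun x => (hin x).symm
  -- measurability facts
  have mjoint : ∀ s : Set ℝ, Measurable fun p : E2 × E2 =>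
      ∫⁻ t in s, G (p.2 + t • (p.1 - p.2)) := by
    intro s
    exact Measurable.lintegral_prod_right'
      (f := fun q : (E2 × E2) × ℝ => G (q.1.2 + q.2 • (q.1.1 - q.1.2)))
      (hGm.comp (by fun_prop))
  have mfix : ∀ (s : Set ℝ) (x : E2), Measurable fun y => ∫⁻ t in s, G (y + t • (x - y)) :=
    fun s x => Measurable.lintegral_prod_right'
      (f := fun q : E2 × ℝ => G (q.1 + q.2 • (x - q.1))) (hGm.comp (by fun_prop))
  have mout : ∀ s : Set ℝ, Measurable fun x => ∫⁻ y in K, ∫⁻ t in s, G (y + t • (x - y)) :=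
    fun s => Measurable.lintegral_prod_right' (mjoint s)
  -- Step 3: pointwise bound
  have hpt : ∀ x ∈ K, ∀ y ∈ K, ENNReal.ofReal ((v x - v y) ^ 2)
      ≤ ENNReal.ofReal (h ^ 2) * ∫⁻ t in Set.Ioc (0:ℝ) 1, G (y + t • (x - y)) := by
    intro x hx y hy
    have hxy : ‖x - y‖ ≤ h := by
      rw [← dist_eq_norm]; exact Metric.dist_le_diam_of_mem hKc.isBounded hx hy
    have h1 := aux_key_pointwise hv x y h hxy
    have h2 : ENNReal.ofReal ((v x - v y) ^ 2)
        ≤ ENNReal.ofReal (h ^ 2 * ∫ t in (0:ℝ)..1, g (y + t • (x - y))) :=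
      ENNReal.ofReal_le_ofReal h1
    rw [ENNReal.ofReal_mul (by positivity)] at h2
    refine h2.trans (le_of_eq ?_)
    congr 1
    rw [intervalIntegral.integral_of_le (by norm_num : (0:ℝ) ≤ 1)]
    exact ofReal_integral_eq_lintegral_ofReal
      ((gcont.comp (by continuity)).integrableOn_Ioc) (ae_of_all _ fun t => gnn _)
  -- splitting of the t-interval
  have hsplit : ∀ x y : E2, (∫⁻ t in Set.Ioc (0:ℝ) 1, G (y + t • (x - y)))
      = (∫⁻ t in Set.Ioc (0:ℝ) (1/2), G (y + t • (x - y)))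
        + ∫⁻ t in Set.Ioc (1/2:ℝ) 1, G (y + t • (x - y)) := by
    intro x y
    rw [← Set.Ioc_union_Ioc_eq_Ioc (by norm_num : (0:ℝ) ≤ 1/2) (by norm_num : (1/2:ℝ) ≤ 1),
      lintegral_union measurableSet_Ioc (Set.Ioc_disjoint_Ioc_of_le le_rfl)]
  -- T1 : part with t in (1/2, 1]
  have hT1 : (∫⁻ x in K, ∫⁻ y in K, ∫⁻ t in Set.Ioc (1/2:ℝ) 1, G (y + t • (x - y)))
      ≤ I * volume K := by
    have hswap1 : (∫⁻ x in K, ∫⁻ y in K, ∫⁻ t in Set.Ioc (1/2:ℝ) 1, G (y + t • (x - y)))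
        = ∫⁻ y in K, ∫⁻ x in K, ∫⁻ t in Set.Ioc (1/2:ℝ) 1, G (y + t • (x - y)) :=
      lintegral_lintegral_swap (mjoint _).aemeasurable
    have hswap1' : ∀ y : E2, (∫⁻ x in K, ∫⁻ t in Set.Ioc (1/2:ℝ) 1, G (y + t • (x - y)))
        = ∫⁻ t in Set.Ioc (1/2:ℝ) 1, ∫⁻ x in K, G (y + t • (x - y)) := fun y =>
      lintegral_lintegral_swap (hGm.comp (by fun_prop)).aemeasurable
    rw [hswap1]
    calc ∫⁻ y in K, ∫⁻ x in K, ∫⁻ t in Set.Ioc (1/2:ℝ) 1, G (y + t • (x - y))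
        = ∫⁻ y in K, ∫⁻ t in Set.Ioc (1/2:ℝ) 1, ∫⁻ x in K, G (y + t • (x - y)) :=
          lintegral_congr fun y => hswap1' y
      _ ≤ ∫⁻ y in K, ∫⁻ t in Set.Ioc (1/2:ℝ) 1, ENNReal.ofReal (t⁻¹ ^ 2) * I := by
          refine setLIntegral_mono' hKm fun y hy => ?_
          refine setLIntegral_mono' measurableSet_Ioc fun t ht => ?_
          exact aux_scale_bound G hGm hK hKm hy (by linarith [ht.1] : (0:ℝ) < t) ht.2
      _ = ∫⁻ y in K, I := by
          refine lintegral_congr fun y => ?_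
          rw [lintegral_mul_const' I _ hIne, aux_tint1, one_mul]
      _ = I * volume K := setLIntegral_const K I
  -- T2 : part with t in (0, 1/2]
  have hrw2 : ∀ (x y : E2) (t : ℝ), y + t • (x - y) = x + (1 - t) • (y - x) := by
    intros; module
  have hT2 : (∫⁻ x in K, ∫⁻ y in K, ∫⁻ t in Set.Ioc (0:ℝ) (1/2), G (y + t • (x - y)))
      ≤ I * volume K := by
    have hswap2 : ∀ x : E2, (∫⁻ y in K, ∫⁻ t in Set.Ioc (0:ℝ) (1/2), G (y + t • (x - y)))
        = ∫⁻ t in Set.Ioc (0:ℝ) (1/2), ∫⁻ y in K, G (y + t • (x - y)) := fun x =>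
      lintegral_lintegral_swap (hGm.comp (by fun_prop)).aemeasurable
    calc ∫⁻ x in K, ∫⁻ y in K, ∫⁻ t in Set.Ioc (0:ℝ) (1/2), G (y + t • (x - y))
        = ∫⁻ x in K, ∫⁻ t in Set.Ioc (0:ℝ) (1/2), ∫⁻ y in K, G (y + t • (x - y)) :=
          lintegral_congr fun x => hswap2 x
      _ ≤ ∫⁻ x in K, ∫⁻ t in Set.Ioc (0:ℝ) (1/2), ENNReal.ofReal ((1-t)⁻¹ ^ 2) * I := by
          refine setLIntegral_mono' hKm fun x hx => ?_
          refine setLIntegral_mono' measurableSet_Ioc fun t ht => ?_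
          have e : (∫⁻ y in K, G (y + t • (x - y))) = ∫⁻ y in K, G (x + (1-t) • (y - x)) :=
            lintegral_congr fun y => by rw [hrw2]
          rw [e]
          exact aux_scale_bound G hGm hK hKm hx (by linarith [ht.2] : (0:ℝ) < 1 - t)
            (by linarith [ht.1] : 1 - t ≤ 1)
      _ = ∫⁻ x in K, I := by
          refine lintegral_congr fun x => ?_
          rw [lintegral_mul_const' I _ hIne, aux_tint2, one_mul]
      _ = I * volume K := setLIntegral_const K I
  -- combine
  have hchain : A ≤ ENNReal.ofReal (h ^ 2) * (I * volume K + I * volume K) := by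
    calc A ≤ ∫⁻ x in K, ∫⁻ y in K,
          ENNReal.ofReal (h ^ 2) * ∫⁻ t in Set.Ioc (0:ℝ) 1, G (y + t • (x - y)) := by
          refine setLIntegral_mono' hKm fun x hx => ?_
          exact setLIntegral_mono' hKm fun y hy => hpt x hx y hy
      _ = ENNReal.ofReal (h ^ 2)
          * ∫⁻ x in K, ∫⁻ y in K, ∫⁻ t in Set.Ioc (0:ℝ) 1, G (y + t • (x - y)) := by
          simp_rw [lintegral_const_mul' _ _ ENNReal.ofReal_ne_top]
      _ = ENNReal.ofReal (h ^ 2)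
          * ((∫⁻ x in K, ∫⁻ y in K, ∫⁻ t in Set.Ioc (0:ℝ) (1/2), G (y + t • (x - y)))
            + ∫⁻ x in K, ∫⁻ y in K, ∫⁻ t in Set.Ioc (1/2:ℝ) 1, G (y + t • (x - y))) := by
          congr 1
          have e1 : ∀ x : E2, (∫⁻ y in K, ∫⁻ t in Set.Ioc (0:ℝ) 1, G (y + t • (x - y)))
              = (∫⁻ y in K, ∫⁻ t in Set.Ioc (0:ℝ) (1/2), G (y + t • (x - y)))
                + ∫⁻ y in K, ∫⁻ t in Set.Ioc (1/2:ℝ) 1, G (y + t • (x - y)) := by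
            intro x
            rw [lintegral_congr fun y => hsplit x y]
            exact lintegral_add_left (mfix _ x) _
          rw [lintegral_congr e1]
          exact lintegral_add_left (mout _) _
      _ ≤ ENNReal.ofReal (h ^ 2) * (I * volume K + I * volume K) := by
          exact mul_le_mul_right (add_le_add hT2 hT1) _
  -- final arithmetic
  have hre : ENNReal.ofReal (h ^ 2) * (I * volume K + I * volume K)
      = ENNReal.ofReal (h ^ 2 * (2 * V * Ig)) := by
    rw [hI, ← ENNReal.ofReal_toReal hKfin, ← hV,
      ← ENNReal.ofReal_mul hIgnn,
      ← ENNReal.ofReal_add (by positivity) (by positivity),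
      ← ENNReal.ofReal_mul (by positivity)]
    congr 1
    ring
  have h2 : 2 * V * Q ≤ h ^ 2 * (2 * V * Ig) := by
    refine (ENNReal.ofReal_le_ofReal_iff (by positivity)).mp ?_
    rw [← hA, ← hre]
    exact hchain
  have h3 : (2 * V) * Q ≤ (2 * V) * (h ^ 2 * Ig) := by nlinarith [h2]
  have h4 : Q ≤ h ^ 2 * Ig := le_of_mul_le_mul_left h3 (by linarith)
  exact h4

lemma aux_vol_pos (x₁ x₂ x₃ : E2) (hind : AffineIndependent ℝ ![x₁, x₂, x₃]) :
    volume (convexHull ℝ {x₁, x₂, x₃} : Set E2) ≠ 0 := by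
  have hr : Set.range ![x₁, x₂, x₃] = {x₁, x₂, x₃} := by
    ext z
    simp [Matrix.range_cons, Matrix.range_empty, Set.insert_union, Set.union_singleton]
    aesop
  have hsp : affineSpan ℝ ({x₁, x₂, x₃} : Set E2) = ⊤ := by
    rw [← hr]
    exact hind.affineSpan_eq_top_iff_card_eq_finrank_add_one.mpr
      (by simp [finrank_euclideanSpace_fin])
  have hconv : Convex ℝ (convexHull ℝ ({x₁, x₂, x₃} : Set E2)) := convex_convexHull ℝ _
  have hint : (interior (convexHull ℝ ({x₁, x₂, x₃} : Set E2))).Nonempty := by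
    rw [hconv.interior_nonempty_iff_affineSpan_eq_top, affineSpan_convexHull]
    exact hsp
  exact (Measure.measure_pos_of_nonempty_interior volume hint).ne'

end PoincareAux

/-- Poincaré–Wirtinger inequality on triangles with a constant independent of
the geometry: `‖v‖_{L²(K)} ≤ C h_K |v|_{H¹(K)}` for mean-zero `v`, and the
deviation of any C¹ function from its mean value over `K` obeys the same bound. -/
theorem stmt0 :
    ∃ C > (0:ℝ), ∀ x₁ x₂ x₃ : E2, AffineIndependent ℝ ![x₁, x₂, x₃] →
      ∀ K : Set E2, K = convexHull ℝ {x₁, x₂, x₃} →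
      ((∀ v : E2 → ℝ, ContDiff ℝ 1 v → (∫ x in K, v x) = 0 →
          (∫ x in K, (v x) ^ 2) ≤
            C ^ 2 * Metric.diam K ^ 2 * ∫ x in K, gradSq v x) ∧
       (∀ f : E2 → ℝ, ContDiff ℝ 1 f →
          (∫ x in K, (f x - (∫ y in K, f y) / (volume K).toReal) ^ 2) ≤
            C ^ 2 * Metric.diam K ^ 2 * ∫ x in K, gradSq f x)) := by
  refine ⟨1, one_pos, ?_⟩
  intro x₁ x₂ x₃ hind K hKdef
  have hKc : IsCompact K := by
    rw [hKdef]
    exact ((Set.finite_singleton x₃).insert x₂ |>.insert x₁).isCompact_convexHull (𝕜 := ℝ)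
  have hK : Convex ℝ K := hKdef ▸ convex_convexHull ℝ _
  have hKm : MeasurableSet K := hKc.isClosed.measurableSet
  have hvol : volume K ≠ 0 := hKdef ▸ aux_vol_pos x₁ x₂ x₃ hind
  have part1 : ∀ v : E2 → ℝ, ContDiff ℝ 1 v → (∫ x in K, v x) = 0 →
      (∫ x in K, (v x) ^ 2) ≤ 1 ^ 2 * Metric.diam K ^ 2 * ∫ x in K, gradSq v x := by
    intro v hv hmean
    rw [one_pow, one_mul]
    exact aux_poincare hv hK hKc hKm hvol hmean
  refine ⟨part1, ?_⟩
  intro f hf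
  set c := (∫ y in K, f y) / (volume K).toReal with hc
  have hVpos : 0 < (volume K).toReal := ENNReal.toReal_pos hvol hKc.measure_lt_top.ne
  have hmean : (∫ x in K, f x - c) = 0 := by
    have hfint : IntegrableOn f K :=
      hf.continuous.continuousOn.integrableOn_compact hKc
    rw [integral_sub hfint (integrableOn_const hKc.measure_lt_top.ne),
      setIntegral_const, hc, smul_eq_mul, measureReal_def]
    field_simp
    simp
  have hgs : gradSq (fun x => f x - c) = gradSq f := by
    funext x
    simp only [gradSq, fderiv_sub_const]
  have := part1 (fun x => f x - c) (hf.sub contDiff_const) hmean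
  rw [hgs] at this
  exact this

end
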